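/- For any graph G and any vertex v of G, the number of 1-nearly independent vertex subsets of G satisfies σ₁(G) = σ₁(G−v) + σ₁(G−N[v]) + Σ_{u∈N(v)} σ₀(G−(N[u]∪N[v])), where G−S denotes deletion of the vertex set S. -/

import Mathlib

set_option linter.unusedSectionVars false
set_option maxHeartbeats 1000000

open Finset

/-- Number of k-nearly independent vertex subsets: subsets whose induced subgraph has exactly k edges. -/
def sigmaK {V : Type*} [Fintype V] [DecidableEq V] (G : SimpleGraph V) [DecidableRel G.Adj] (k : ℕ) : ℕ :=
  (Finset.univ.filter fun s : Finset V =>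
    (s.sym2.filter fun e => e ∈ G.edgeSet).card = k).card

/-- A graph is good if for every edge uv, N[u] ∪ N[v] = V(G). -/
def IsGoodGraph {V : Type*} (G : SimpleGraph V) : Prop :=
  ∀ u v : V, G.Adj u v →
    (insert u (G.neighborSet u)) ∪ (insert v (G.neighborSet v)) = Set.univ

section Aux

variable {V : Type*} [Fintype V] [DecidableEq V] {G : SimpleGraph V} [DecidableRel G.Adj]

/-- number of edges inside a vertex subset -/
def ecnt (G : SimpleGraph V) [DecidableRel G.Adj] (s : Finset V) : ℕ :=
  (s.sym2.filter fun e => e ∈ G.edgeSet).card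

lemma ecnt_insert {a : V} {s : Finset V} (ha : a ∉ s) :
    ecnt G (insert a s) = (s.filter (G.Adj a)).card + ecnt G s := by
  classical
  rw [ecnt, Finset.sym2_insert, filter_union]
  rw [card_union_of_disjoint]
  · congr 1
    rw [← card_image_of_injective (s.filter (G.Adj a)) (fun b c h => by
      simpa using Sym2.congr_right.mp h : Function.Injective (fun b => s(a, b)))]
    congr 1
    ext e
    simp only [mem_filter, mem_image, mem_insert]
    constructor
    · rintro ⟨⟨b, hb | hb, rfl⟩, he⟩
      · subst hb; simp [SimpleGraph.mem_edgeSet] at he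
      · exact ⟨b, ⟨hb, by simpa [SimpleGraph.mem_edgeSet] using he⟩, rfl⟩
    · rintro ⟨b, ⟨hb, hadj⟩, rfl⟩
      exact ⟨⟨b, Or.inr hb, rfl⟩, by simpa [SimpleGraph.mem_edgeSet] using hadj⟩
  · rw [Finset.disjoint_left]
    rintro e he he'
    simp only [mem_filter, mem_image, mem_insert] at he he'
    obtain ⟨⟨b, _, rfl⟩, _⟩ := he
    exact ha (Finset.mem_sym2_iff.mp he'.1 a (by simp))

lemma ecnt_insert_of_no_adj {a : V} {s : Finset V} (ha : a ∉ s)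
    (h : ∀ x ∈ s, ¬ G.Adj a x) :
    ecnt G (insert a s) = ecnt G s := by
  rw [ecnt_insert ha, filter_false_of_mem h]
  simp

lemma ecnt_map (P : Set V) [DecidablePred (· ∈ P)] (s : Finset P) :
    (s.sym2.filter fun e => e ∈ (G.induce P).edgeSet).card
      = ecnt G (s.map (Function.Embedding.subtype _)) := by
  rw [ecnt, Finset.sym2_map, Finset.filter_map, Finset.card_map]
  congr 1
  apply Finset.filter_congr
  intro e _
  induction e using Sym2.inductionOn with
  | hf x y => simp [SimpleGraph.mem_edgeSet, Function.Embedding.sym2Map]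

lemma sigmaK_induce (P : Set V) [DecidablePred (· ∈ P)] (k : ℕ) :
    sigmaK (G.induce P) k =
      (Finset.univ.filter fun s : Finset V => (∀ x ∈ s, x ∈ P) ∧ ecnt G s = k).card := by
  classical
  apply Finset.card_bij (fun s _ => s.map (Function.Embedding.subtype _))
  · intro s hs
    simp only [sigmaK, mem_filter, mem_univ, true_and] at hs ⊢
    refine ⟨fun x hx => ?_, by rw [← ecnt_map]; exact hs⟩
    simp only [Finset.mem_map, Function.Embedding.coe_subtype] at hx
    obtain ⟨⟨y, hy⟩, _, rfl⟩ := hx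
    exact hy
  · intro s _ t _ h
    exact Finset.map_injective _ h
  · intro t ht
    simp only [mem_filter, mem_univ, true_and] at ht
    have hmap : (t.subtype (· ∈ P)).map (Function.Embedding.subtype _) = t := by
      rw [Finset.subtype_map, Finset.filter_true_of_mem ht.1]
    refine ⟨t.subtype (· ∈ P), ?_, hmap⟩
    simp only [mem_filter, mem_univ, true_and]
    rw [ecnt_map, hmap]
    exact ht.2

/-- In a set with exactly one induced edge, any two induced edges coincide. -/
lemma edge_eq {s : Finset V} (hs : ecnt G s = 1) {a b c d : V}
    (ha : a ∈ s) (hb : b ∈ s) (hc : c ∈ s) (hd : d ∈ s)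
    (hab : G.Adj a b) (hcd : G.Adj c d) : s(a, b) = s(c, d) := by
  obtain ⟨e, he⟩ := Finset.card_eq_one.mp hs
  have h1 : s(a, b) ∈ s.sym2.filter (fun e => e ∈ G.edgeSet) :=
    mem_filter.mpr ⟨Finset.mk_mem_sym2_iff.mpr ⟨ha, hb⟩, hab⟩
  have h2 : s(c, d) ∈ s.sym2.filter (fun e => e ∈ G.edgeSet) :=
    mem_filter.mpr ⟨Finset.mk_mem_sym2_iff.mpr ⟨hc, hd⟩, hcd⟩
  rw [he, Finset.mem_singleton] at h1 h2
  rw [h1, h2]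

end Aux

theorem stmt0 {V : Type*} [Fintype V] [DecidableEq V] (G : SimpleGraph V) [DecidableRel G.Adj]
    (v : V) :
    sigmaK G 1 =
      sigmaK (G.induce {x | x ≠ v}) 1 +
      sigmaK (G.induce {x | x ≠ v ∧ ¬ G.Adj v x}) 1 +
      ∑ u ∈ G.neighborFinset v,
        sigmaK (G.induce {x | x ≠ u ∧ x ≠ v ∧ ¬ G.Adj u x ∧ ¬ G.Adj v x}) 0 := by
  classical
  -- the master set
  set A : Finset (Finset V) := Finset.univ.filter (fun s => ecnt G s = 1) with hA
  have hLHS : sigmaK G 1 = A.card := rfl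
  -- split by membership of v
  have hsplit1 : A.card = (A.filter (fun s => v ∉ s)).card + (A.filter (fun s => v ∈ s)).card := by
    rw [add_comm, Finset.card_filter_add_card_filter_not]
  -- split the second part by whether v has a neighbor in s
  have hsplit2 : (A.filter (fun s => v ∈ s)).card =
      ((A.filter (fun s => v ∈ s)).filter (fun s => ∀ x ∈ s, ¬ G.Adj v x)).card +
      ((A.filter (fun s => v ∈ s)).filter (fun s => ¬ ∀ x ∈ s, ¬ G.Adj v x)).card := by
    rw [Finset.card_filter_add_card_filter_not]
  -- Part 1
  have h1 : (A.filter (fun s => v ∉ s)).card = sigmaK (G.induce {x | x ≠ v}) 1 := by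
    rw [sigmaK_induce]
    congr 1
    rw [hA, Finset.filter_filter]
    apply Finset.filter_congr
    intro s _
    simp only [Set.mem_setOf_eq]
    constructor
    · rintro ⟨h1, h2⟩; exact ⟨fun x hx hxv => h2 (hxv ▸ hx), h1⟩
    · rintro ⟨h1, h2⟩; exact ⟨h2, fun hv => h1 v hv rfl⟩
  -- Part 2
  have h2 : ((A.filter (fun s => v ∈ s)).filter (fun s => ∀ x ∈ s, ¬ G.Adj v x)).card =
      sigmaK (G.induce {x | x ≠ v ∧ ¬ G.Adj v x}) 1 := by
    rw [sigmaK_induce]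
    apply Finset.card_bij (fun s _ => s.erase v)
    · intro s hs
      simp only [hA, Finset.mem_filter, Finset.mem_univ, true_and, Set.mem_setOf_eq] at hs ⊢
      obtain ⟨⟨hec, hv⟩, hno⟩ := hs
      refine ⟨fun x hx => ⟨Finset.ne_of_mem_erase hx, hno x (Finset.mem_of_mem_erase hx)⟩, ?_⟩
      have : ecnt G (insert v (s.erase v)) = ecnt G (s.erase v) :=
        ecnt_insert_of_no_adj (Finset.notMem_erase v s)
          (fun x hx => hno x (Finset.mem_of_mem_erase hx))
      rw [Finset.insert_erase hv] at this
      rw [← this]; exact hec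
    · intro s hs t ht h
      simp only [hA, Finset.mem_filter] at hs ht
      rw [← Finset.insert_erase hs.1.2, ← Finset.insert_erase ht.1.2, h]
    · intro t ht
      simp only [Finset.mem_filter, Finset.mem_univ, true_and, Set.mem_setOf_eq] at ht
      obtain ⟨hmem, hec⟩ := ht
      have hvt : v ∉ t := fun hv => (hmem v hv).1 rfl
      refine ⟨insert v t, ?_, by rw [Finset.erase_insert hvt]⟩
      simp only [hA, Finset.mem_filter, Finset.mem_univ, true_and]
      refine ⟨⟨?_, Finset.mem_insert_self v t⟩, ?_⟩
      · rw [ecnt_insert_of_no_adj hvt (fun x hx => (hmem x hx).2)]; exact hec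
      · intro x hx
        rcases Finset.mem_insert.mp hx with rfl | hx
        · exact fun h => G.irrefl h
        · exact (hmem x hx).2
  -- Part 3
  have h3 : ((A.filter (fun s => v ∈ s)).filter (fun s => ¬ ∀ x ∈ s, ¬ G.Adj v x)).card =
      ∑ u ∈ G.neighborFinset v,
        sigmaK (G.induce {x | x ≠ u ∧ x ≠ v ∧ ¬ G.Adj u x ∧ ¬ G.Adj v x}) 0 := by
    -- express as a disjoint union over neighbors
    have hbi : (A.filter (fun s => v ∈ s)).filter (fun s => ¬ ∀ x ∈ s, ¬ G.Adj v x) =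
        (G.neighborFinset v).biUnion (fun u =>
          A.filter (fun s => v ∈ s ∧ u ∈ s ∧ G.Adj v u)) := by
      ext s
      simp only [Finset.mem_biUnion, Finset.mem_filter, SimpleGraph.mem_neighborFinset,
        not_forall]
      constructor
      · rintro ⟨⟨hsA, hv⟩, u, hu, hadj⟩
        exact ⟨u, not_not.mp hadj, hsA, hv, hu, not_not.mp hadj⟩
      · rintro ⟨u, hadj, hsA, hv, hu, _⟩
        exact ⟨⟨hsA, hv⟩, u, hu, not_not_intro hadj⟩
    rw [hbi, Finset.card_biUnion]
    · apply Finset.sum_congr rfl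
      intro u hu
      rw [SimpleGraph.mem_neighborFinset] at hu
      have huv : u ≠ v := fun h => G.irrefl (h ▸ hu)
      rw [sigmaK_induce]
      apply Finset.card_bij (fun s _ => (s.erase v).erase u)
      · intro s hs
        simp only [hA, Finset.mem_filter, Finset.mem_univ, true_and, Set.mem_setOf_eq] at hs ⊢
        obtain ⟨hec, hv, hus, hadj⟩ := hs
        -- every other vertex is non-adjacent to u and v
        have key : ∀ x ∈ s, x ≠ u → x ≠ v → ¬ G.Adj u x ∧ ¬ G.Adj v x := by
          intro x hx hxu hxv
          constructor
          · intro hux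
            have := edge_eq hec hus hx hv hus hux hu
            rw [Sym2.eq_iff] at this
            rcases this with ⟨h1, _⟩ | ⟨_, h2⟩
            · exact huv h1
            · exact hxv h2
          · intro hvx
            have := edge_eq hec hv hx hv hus hvx hu
            rw [Sym2.eq_iff] at this
            rcases this with ⟨_, h2⟩ | ⟨h1, _⟩
            · exact hxu h2
            · exact G.irrefl (h1 ▸ hu)
        refine ⟨fun x hx => ?_, ?_⟩
        · have hxs := Finset.mem_of_mem_erase (Finset.mem_of_mem_erase hx)
          have hxu := Finset.ne_of_mem_erase hx
          have hxv := Finset.ne_of_mem_erase (Finset.mem_of_mem_erase hx)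
          exact ⟨hxu, hxv, (key x hxs hxu hxv).1, (key x hxs hxu hxv).2⟩
        · -- compute edge count
          have hu' : u ∈ s.erase v := Finset.mem_erase.mpr ⟨huv, hus⟩
          have hstep1 : ecnt G s = (((s.erase v)).filter (G.Adj v)).card + ecnt G (s.erase v) := by
            conv_lhs => rw [← Finset.insert_erase hv]
            exact ecnt_insert (Finset.notMem_erase v s)
          have hfil : ((s.erase v)).filter (G.Adj v) = {u} := by
            ext x
            simp only [Finset.mem_filter, Finset.mem_erase, Finset.mem_singleton]
            constructor
            · rintro ⟨⟨hxv, hxs⟩, hvx⟩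
              by_contra hxu
              exact (key x hxs hxu hxv).2 hvx
            · rintro rfl; exact ⟨⟨huv, hus⟩, hu⟩
          have hstep2 : ecnt G (s.erase v) = ecnt G ((s.erase v).erase u) := by
            conv_lhs => rw [← Finset.insert_erase hu']
            apply ecnt_insert_of_no_adj (Finset.notMem_erase u _)
            intro x hx
            have hxs := Finset.mem_of_mem_erase (Finset.mem_of_mem_erase hx)
            exact (key x hxs (Finset.ne_of_mem_erase hx)
              (Finset.ne_of_mem_erase (Finset.mem_of_mem_erase hx))).1
          rw [hstep1, hfil, Finset.card_singleton, hstep2] at hec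
          omega
      · intro s hs t ht h
        simp only [hA, Finset.mem_filter] at hs ht
        have hrec : ∀ r : Finset V, v ∈ r → u ∈ r →
            insert v (insert u ((r.erase v).erase u)) = r := by
          intro r hvr hur
          rw [Finset.insert_erase (Finset.mem_erase.mpr ⟨huv, hur⟩), Finset.insert_erase hvr]
        rw [← hrec s hs.2.1 hs.2.2.1, ← hrec t ht.2.1 ht.2.2.1, h]
      · intro t ht
        simp only [Finset.mem_filter, Finset.mem_univ, true_and, Set.mem_setOf_eq] at ht
        obtain ⟨hmem, hec⟩ := ht
        have hut : u ∉ t := fun h => (hmem u h).1 rfl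
        have hvt : v ∉ t := fun h => (hmem v h).2.1 rfl
        have hvut : v ∉ insert u t := by
          simp only [Finset.mem_insert]; rintro (rfl | h); exact huv.symm rfl; exact hvt h
        refine ⟨insert v (insert u t), ?_, ?_⟩
        · simp only [hA, Finset.mem_filter, Finset.mem_univ, true_and]
          refine ⟨?_, Finset.mem_insert_self v _,
            Finset.mem_insert.mpr (Or.inr (Finset.mem_insert_self u t)), hu⟩
          rw [ecnt_insert hvut]
          have h1 : ecnt G (insert u t) = ecnt G t :=
            ecnt_insert_of_no_adj hut (fun x hx => (hmem x hx).2.2.1)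
          have h2 : (insert u t).filter (G.Adj v) = {u} := by
            ext x
            simp only [Finset.mem_filter, Finset.mem_insert, Finset.mem_singleton]
            constructor
            · rintro ⟨rfl | hx, hvx⟩
              · rfl
              · exact absurd hvx (hmem x hx).2.2.2
            · rintro rfl; exact ⟨Or.inl rfl, hu⟩
          rw [h1, h2, hec, Finset.card_singleton]
        · rw [Finset.erase_insert hvut, Finset.erase_insert hut]
    · -- pairwise disjoint
      intro u₁ h₁ u₂ h₂ hne
      rw [Finset.mem_coe, SimpleGraph.mem_neighborFinset] at h₁ h₂
      simp only [Function.onFun, Finset.disjoint_left]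
      intro s hs₁ hs₂
      simp only [hA, Finset.mem_filter] at hs₁ hs₂
      exact hne (by
        have := edge_eq hs₁.1.2 hs₁.2.1 hs₁.2.2.1 hs₂.2.1 hs₂.2.2.1 hs₁.2.2.2 hs₂.2.2.2
        rw [Sym2.eq_iff] at this
        rcases this with ⟨_, h⟩ | ⟨h1, h2⟩
        · exact h
        · exact absurd h1 (G.ne_of_adj h₂))
  rw [hLHS, hsplit1, hsplit2, h1, h2, h3, add_assoc]
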